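/- Let S be an invertible bounded operator on a complex Hilbert space H. Then for all unit vectors x, y ∈ H, sup over rank-one norm-one operators X of ‖S X S⁻¹ + S⁻¹ X S‖ ≥ 2|⟨Sx, y⟩ · ⟨S⁻¹x, y⟩|. -/

import Mathlib

theorem injective_norm_lower_bound (H : Type*) [NormedAddCommGroup H]
    [InnerProductSpace ℂ H] [CompleteSpace H] (S Sinv : H →L[ℂ] H)
    (hS1 : S * Sinv = 1) (hS2 : Sinv * S = 1)
    (x y : H) (hx : ‖x‖ = 1) (hy : ‖y‖ = 1) :
    sSup {r : ℝ | ∃ X : H →L[ℂ] H, ‖X‖ = 1 ∧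
        LinearMap.rank (X : H →ₗ[ℂ] H) = 1 ∧
        r = ‖S * X * Sinv + Sinv * X * S‖}
      ≥ 2 * ‖(inner ℂ (S x) y : ℂ) * (inner ℂ (Sinv x) y : ℂ)‖ := by
  have hx0 : x ≠ 0 := by intro h; rw [h, norm_zero] at hx; norm_num at hx
  have hyy : (inner ℂ y y : ℂ) = 1 := by
    rw [inner_self_eq_norm_sq_to_K, hy]; norm_num
  set X : H →L[ℂ] H := (innerSL ℂ y).smulRight x with hXdef
  have hXapp : ∀ t, X t = (inner ℂ y t : ℂ) • x := fun t => rfl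
  have hXnorm : ‖X‖ = 1 := by
    rw [hXdef, ContinuousLinearMap.norm_smulRight_apply, innerSL_apply_norm, hx, hy]
    norm_num
  have hXrank : LinearMap.rank (X : H →ₗ[ℂ] H) = 1 := by
    have hrange : LinearMap.range (X : H →ₗ[ℂ] H) = Submodule.span ℂ {x} := by
      apply le_antisymm
      · rintro _ ⟨t, rfl⟩
        exact Submodule.smul_mem _ _ (Submodule.mem_span_singleton_self x)
      · rw [Submodule.span_singleton_le_iff_mem]
        exact ⟨y, by simp [hXapp, hyy, hy]⟩
    rw [LinearMap.rank, hrange, rank_span_set (LinearIndepOn.singleton (R := ℂ) (v := id) hx0),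
      Cardinal.mk_singleton]
  set A : H →L[ℂ] H := S * X * Sinv + Sinv * X * S with hAdef
  have hAx : A x = (inner ℂ y (Sinv x) : ℂ) • S x + (inner ℂ y (S x) : ℂ) • Sinv x := by
    simp only [hAdef, ContinuousLinearMap.add_apply, ContinuousLinearMap.mul_apply, hXapp,
      map_smul]
  have hinner : (inner ℂ y (A x) : ℂ)
      = 2 * ((inner ℂ y (S x) : ℂ) * (inner ℂ y (Sinv x) : ℂ)) := by
    rw [hAx, inner_add_right, inner_smul_right, inner_smul_right]
    ring
  have habs : ‖(inner ℂ y (A x) : ℂ)‖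
      = 2 * ‖(inner ℂ (S x) y : ℂ) * (inner ℂ (Sinv x) y : ℂ)‖ := by
    rw [hinner]
    rw [← inner_conj_symm (S x) y, ← inner_conj_symm (Sinv x) y]
    simp only [norm_mul, Complex.norm_conj, Complex.norm_two]
  have key : 2 * ‖(inner ℂ (S x) y : ℂ) * (inner ℂ (Sinv x) y : ℂ)‖ ≤ ‖A‖ := by
    rw [← habs]
    calc ‖(inner ℂ y (A x) : ℂ)‖ = ‖(inner ℂ y (A x) : ℂ)‖ := rfl
      _ ≤ ‖y‖ * ‖A x‖ := norm_inner_le_norm _ _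
      _ = ‖A x‖ := by rw [hy, one_mul]
      _ ≤ ‖A‖ * ‖x‖ := A.le_opNorm x
      _ = ‖A‖ := by rw [hx, mul_one]
  have hbdd : BddAbove {r : ℝ | ∃ X : H →L[ℂ] H, ‖X‖ = 1 ∧
      LinearMap.rank (X : H →ₗ[ℂ] H) = 1 ∧ r = ‖S * X * Sinv + Sinv * X * S‖} := by
    refine ⟨2 * ‖S‖ * ‖Sinv‖, ?_⟩
    rintro r ⟨Z, hZ, -, rfl⟩
    calc ‖S * Z * Sinv + Sinv * Z * S‖ ≤ ‖S * Z * Sinv‖ + ‖Sinv * Z * S‖ := norm_add_le _ _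
      _ ≤ ‖S * Z‖ * ‖Sinv‖ + ‖Sinv * Z‖ * ‖S‖ := by
          gcongr <;> exact norm_mul_le _ _
      _ ≤ ‖S‖ * ‖Z‖ * ‖Sinv‖ + ‖Sinv‖ * ‖Z‖ * ‖S‖ := by
          gcongr <;> exact norm_mul_le _ _
      _ = 2 * ‖S‖ * ‖Sinv‖ := by rw [hZ]; ring
  have hmem : ‖A‖ ∈ {r : ℝ | ∃ X : H →L[ℂ] H, ‖X‖ = 1 ∧
      LinearMap.rank (X : H →ₗ[ℂ] H) = 1 ∧ r = ‖S * X * Sinv + Sinv * X * S‖} :=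
    ⟨X, hXnorm, hXrank, rfl⟩
  exact le_trans key (le_csSup hbdd hmem)
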